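/- Let B be a quaternion algebra over ℚ with reduced trace trd and reduced norm nrd, let R ⊆ B be an order, and let O be an order of discriminant Δ < 0 in an imaginary quadratic field K. Write V = {x ∈ B : trd(x) = 0} and R₀ = V ∩ (ℤ + 2R) (the Gross lattice of R). Then there exists a ring embedding O ↪ R if and only if |Δ| is represented by the quadratic lattice R₀ equipped with the reduced norm, i.e. there exists b ∈ R₀ with nrd(b) = |Δ|. -/

import Mathlib

open Polynomial

/-- The imaginary quadratic order of discriminant `Δ`, presented as
`ℤ[X]/(X² + |Δ|·X + (Δ² + |Δ|)/4)`, the minimal polynomial of `(Δ + √Δ)/2`. -/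
noncomputable def ImagQuadOrder (Δ : ℤ) : Type :=
  AdjoinRoot ((X ^ 2 + C (-Δ) * X + C ((Δ ^ 2 - Δ) / 4) : ℤ[X]))

noncomputable instance (Δ : ℤ) : CommRing (ImagQuadOrder Δ) :=
  inferInstanceAs (CommRing (AdjoinRoot _))

set_option maxHeartbeats 1600000 in
theorem gross_lattice_embedding_criterion (c₁ c₂ : ℚ)
    (R : Subring (QuaternionAlgebra ℚ c₁ 0 c₂)) (Δ : ℤ) (hΔneg : Δ < 0)
    (hΔ4 : Δ % 4 = 0 ∨ Δ % 4 = 1) :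
    (∃ f : ImagQuadOrder Δ →+* R, Function.Injective f) ↔
      ∃ b : QuaternionAlgebra ℚ c₁ 0 c₂,
        (b + star b = 0) ∧
        (∃ (a : ℤ) (r : QuaternionAlgebra ℚ c₁ 0 c₂), r ∈ R ∧ b = (a : _) + 2 * r) ∧
        b * star b = ((|Δ| : ℤ) : QuaternionAlgebra ℚ c₁ 0 c₂) := by
  set m : ℤ := (Δ ^ 2 - Δ) / 4 with hm_def
  set p : ℤ[X] := X ^ 2 + C (-Δ) * X + C m with hp_def
  have hdvd : (4 : ℤ) ∣ Δ ^ 2 - Δ := by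
    rcases hΔ4 with h | h
    · obtain ⟨q, hq⟩ : (4:ℤ) ∣ Δ := Int.dvd_of_emod_eq_zero h
      exact ⟨q * (4 * q - 1), by rw [hq]; ring⟩
    · obtain ⟨q, hq⟩ : (4:ℤ) ∣ Δ - 1 := by omega
      exact ⟨Δ * q, by linear_combination Δ * hq⟩
  have hm4 : m * 4 = Δ ^ 2 - Δ := Int.ediv_mul_cancel hdvd
  have hmQ : (m : ℚ) * 4 = (Δ:ℚ) ^ 2 - (Δ:ℚ) := by exact_mod_cast hm4
  have hmB : ((m:ℤ) : (QuaternionAlgebra ℚ c₁ 0 c₂)) * 4 = ((Δ:ℤ) : (QuaternionAlgebra ℚ c₁ 0 c₂)) ^ 2 - ((Δ:ℤ) : (QuaternionAlgebra ℚ c₁ 0 c₂)) := by exact_mod_cast congrArg (fun n : ℤ => (n : QuaternionAlgebra ℚ c₁ 0 c₂)) hm4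
  have habs : (|Δ| : ℤ) = -Δ := abs_of_neg hΔneg
  have hΔQ : (Δ : ℚ) < 0 := by exact_mod_cast hΔneg
  constructor
  · rintro ⟨f, -⟩
    set yR : ↥R := f (AdjoinRoot.root p) with hyR_def
    set y : (QuaternionAlgebra ℚ c₁ 0 c₂) := (yR : (QuaternionAlgebra ℚ c₁ 0 c₂)) with hy_def
    have hB : p.eval₂ (Int.castRingHom (QuaternionAlgebra ℚ c₁ 0 c₂)) y = 0 := by
      have h0 : p.eval₂ (AdjoinRoot.of p) (AdjoinRoot.root p) = 0 := AdjoinRoot.eval₂_root p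
      have h1 := congrArg (R.subtype.comp f) h0
      erw [hom_eval₂, map_zero] at h1
      rwa [Subsingleton.elim ((R.subtype.comp f).comp (AdjoinRoot.of p)) (Int.castRingHom (QuaternionAlgebra ℚ c₁ 0 c₂))]
        at h1
    have hq : y * y = ((Δ:ℤ) : (QuaternionAlgebra ℚ c₁ 0 c₂)) * y - ((m:ℤ) : (QuaternionAlgebra ℚ c₁ 0 c₂)) := by
      rw [hp_def, C_mul_X_eq_monomial] at hB
      simp only [eval₂_add, eval₂_monomial, eval₂_X_pow, eval₂_C, Int.coe_castRingHom,
        Int.cast_neg, pow_one] at hB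
      rw [sq] at hB
      linear_combination (norm := noncomm_ring) hB
    -- component equations
    have hre : y.re * y.re + c₁ * y.imI * y.imI + c₂ * y.imJ * y.imJ
        - c₁ * c₂ * y.imK * y.imK = (Δ:ℚ) * y.re - (m:ℚ) := by
      have := congrArg QuaternionAlgebra.re hq
      simpa [QuaternionAlgebra.re_mul] using this
    have hi : 2 * y.re * y.imI = (Δ:ℚ) * y.imI := by
      have := congrArg QuaternionAlgebra.imI hq
      simp [QuaternionAlgebra.imI_mul] at this
      linarith
    have hj : 2 * y.re * y.imJ = (Δ:ℚ) * y.imJ := by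
      have := congrArg QuaternionAlgebra.imJ hq
      simp [QuaternionAlgebra.imJ_mul] at this
      linarith
    have hk : 2 * y.re * y.imK = (Δ:ℚ) * y.imK := by
      have := congrArg QuaternionAlgebra.imK hq
      simp [QuaternionAlgebra.imK_mul] at this
      linarith
    have hw : 2 * y.re = (Δ:ℚ) := by
      by_contra hne
      have hI : y.imI = 0 := by
        rcases mul_eq_zero.mp (by linear_combination hi : (2 * y.re - (Δ:ℚ)) * y.imI = 0) with h|h
        · exact absurd (by linarith) hne
        · exact h
      have hJ : y.imJ = 0 := by
        rcases mul_eq_zero.mp (by linear_combination hj : (2 * y.re - (Δ:ℚ)) * y.imJ = 0) with h|h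
        · exact absurd (by linarith) hne
        · exact h
      have hK : y.imK = 0 := by
        rcases mul_eq_zero.mp (by linear_combination hk : (2 * y.re - (Δ:ℚ)) * y.imK = 0) with h|h
        · exact absurd (by linarith) hne
        · exact h
      rw [hI, hJ, hK] at hre
      nlinarith [sq_nonneg (2 * y.re - (Δ:ℚ)), hre, hmQ, hΔQ]
    set b : (QuaternionAlgebra ℚ c₁ 0 c₂) := 2 * y - ((Δ:ℤ) : (QuaternionAlgebra ℚ c₁ 0 c₂)) with hb_def
    have hbre : b.re = 0 := by
      rw [hb_def]
      have h2 : ((2 : (QuaternionAlgebra ℚ c₁ 0 c₂)) * y).re = 2 * y.re := by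
        rw [two_mul]; simp [two_mul]
      simp [h2, hw]
    have hcD : ((Δ:ℤ) : (QuaternionAlgebra ℚ c₁ 0 c₂)) * y = y * ((Δ:ℤ) : (QuaternionAlgebra ℚ c₁ 0 c₂)) := (Int.cast_commute Δ y).eq
    have hbb : b * b = ((Δ:ℤ) : (QuaternionAlgebra ℚ c₁ 0 c₂)) := by
      rw [hb_def]
      linear_combination (norm := noncomm_ring) 4 * hq + 2 * hcD - hmB
    have hstarb : star b = -b := by
      ext
      · simp [hbre]
      · simp
      · simp
      · simp
    refine ⟨b, ?_, ⟨-Δ, y, yR.2, by rw [hb_def]; push_cast; noncomm_ring⟩, ?_⟩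
    · rw [QuaternionAlgebra.self_add_star', hbre]
      norm_num
    · rw [habs, hstarb, mul_neg, hbb]
      push_cast
      ring
  · rintro ⟨b, htr, ⟨a, r, hrR, hbr⟩, hnrm⟩
    rw [habs] at hnrm
    have hbre : b.re = 0 := by
      have := congrArg QuaternionAlgebra.re htr
      simp at this
      linarith
    have hstarb : star b = -b := by
      ext
      · simp [hbre]
      · simp
      · simp
      · simp
    have hb2 : b * b = ((Δ:ℤ) : QuaternionAlgebra ℚ c₁ 0 c₂) := by
      rw [hstarb, mul_neg] at hnrm
      push_cast at hnrm ⊢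
      linear_combination (norm := noncomm_ring) -hnrm
    obtain ⟨y, hyR, h2y⟩ :
        ∃ y : QuaternionAlgebra ℚ c₁ 0 c₂, y ∈ R ∧
          2 * y = ((Δ:ℤ) : QuaternionAlgebra ℚ c₁ 0 c₂) + b := by
      by_cases h2 : (2:ℤ) ∣ (Δ + a)
      · obtain ⟨e, he⟩ := h2
        refine ⟨((e:ℤ) : QuaternionAlgebra ℚ c₁ 0 c₂) + r,
          R.add_mem (intCast_mem R e) hrR, ?_⟩
        rw [hbr]
        have heB : ((Δ:ℤ) : QuaternionAlgebra ℚ c₁ 0 c₂) + ((a:ℤ) : QuaternionAlgebra ℚ c₁ 0 c₂)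
            = 2 * ((e:ℤ) : QuaternionAlgebra ℚ c₁ 0 c₂) := by
          exact_mod_cast congrArg (fun n : ℤ => (n : QuaternionAlgebra ℚ c₁ 0 c₂)) he
        linear_combination (norm := noncomm_ring) -heB
      · have hak : Odd (Δ - a^2) := by
          have h1 : (Δ + a) % 2 = 1 := by omega
          rcases Int.even_or_odd a with ⟨t, ht⟩ | ⟨t, ht⟩
          · obtain ⟨w, hw⟩ : ∃ w, Δ = 2*w + 1 := ⟨Δ/2, by omega⟩
            exact ⟨w - 2*t^2, by rw [ht]; linear_combination hw⟩
          · obtain ⟨w, hw⟩ : ∃ w, Δ = 2*w := ⟨Δ/2, by omega⟩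
            exact ⟨w - 2*t^2 - 2*t - 1, by rw [ht]; linear_combination hw⟩
        obtain ⟨l, hl⟩ := hak
        set k : ℤ := Δ - a^2 with hk_def
        set s : QuaternionAlgebra ℚ c₁ 0 c₂ := r * r + ((a:ℤ) : QuaternionAlgebra ℚ c₁ 0 c₂) * r
          with hs_def
        have hsR : s ∈ R := R.add_mem (R.mul_mem hrR hrR) (R.mul_mem (intCast_mem R a) hrR)
        have hcomm : ((a:ℤ) : QuaternionAlgebra ℚ c₁ 0 c₂) * r
            = r * ((a:ℤ) : QuaternionAlgebra ℚ c₁ 0 c₂) := (Int.cast_commute a r).eq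
        have h4s : (4 : QuaternionAlgebra ℚ c₁ 0 c₂) * s = ((k:ℤ) : QuaternionAlgebra ℚ c₁ 0 c₂) := by
          rw [hbr] at hb2
          rw [hs_def, hk_def]
          push_cast
          linear_combination (norm := noncomm_ring) hb2 + 2 * hcomm
        set u : QuaternionAlgebra ℚ c₁ 0 c₂ :=
          ((k:ℤ) : QuaternionAlgebra ℚ c₁ 0 c₂) * s - ((l^2 + l : ℤ) : QuaternionAlgebra ℚ c₁ 0 c₂)
          with hu_def
        have huR : u ∈ R := R.sub_mem (R.mul_mem (intCast_mem R k) hsR) (intCast_mem R _)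
        have h4u : (4 : QuaternionAlgebra ℚ c₁ 0 c₂) * u = 1 := by
          have hkZ : k * k - 4*(l^2 + l) = 1 := by linear_combination (k + 2*l + 1) * hl
          have hkB : ((k:ℤ) : QuaternionAlgebra ℚ c₁ 0 c₂) * ((k:ℤ) : QuaternionAlgebra ℚ c₁ 0 c₂)
              - 4 * ((l^2 + l : ℤ) : QuaternionAlgebra ℚ c₁ 0 c₂) = 1 := by
            exact_mod_cast congrArg (fun n : ℤ => (n : QuaternionAlgebra ℚ c₁ 0 c₂)) hkZ
          rw [hu_def]
          linear_combination (norm := noncomm_ring)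
            ((k:ℤ) : QuaternionAlgebra ℚ c₁ 0 c₂) * h4s + hkB
        refine ⟨((Δ + a : ℤ) : QuaternionAlgebra ℚ c₁ 0 c₂) * (u + u) + r,
          R.add_mem (R.mul_mem (intCast_mem R _) (R.add_mem huR huR)) hrR, ?_⟩
        rw [hbr]
        push_cast
        linear_combination (norm := noncomm_ring)
          (((Δ:ℤ) : QuaternionAlgebra ℚ c₁ 0 c₂) + ((a:ℤ) : QuaternionAlgebra ℚ c₁ 0 c₂)) * h4u
    have hcDb : ((Δ:ℤ) : QuaternionAlgebra ℚ c₁ 0 c₂) * b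
        = b * ((Δ:ℤ) : QuaternionAlgebra ℚ c₁ 0 c₂) := (Int.cast_commute Δ b).eq
    have hfour : ∀ X Y : QuaternionAlgebra ℚ c₁ 0 c₂,
        (4 : QuaternionAlgebra ℚ c₁ 0 c₂) * X = (4 : QuaternionAlgebra ℚ c₁ 0 c₂) * Y → X = Y := by
      intro X Y h
      have h4 : (4 : QuaternionAlgebra ℚ c₁ 0 c₂) = algebraMap ℚ _ (4:ℚ) := (map_ofNat _ 4).symm
      rw [h4, ← Algebra.smul_def, ← Algebra.smul_def] at h
      exact smul_right_injective _ (by norm_num : (4:ℚ) ≠ 0) h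
    have hyquad : y * y = ((Δ:ℤ) : QuaternionAlgebra ℚ c₁ 0 c₂) * y
        - ((m:ℤ) : QuaternionAlgebra ℚ c₁ 0 c₂) := by
      apply hfour
      linear_combination (norm := noncomm_ring)
        h2y * (2 * y) + (((Δ:ℤ) : QuaternionAlgebra ℚ c₁ 0 c₂) + b) * h2y
          - 2 * ((Δ:ℤ) : QuaternionAlgebra ℚ c₁ 0 c₂) * h2y + hb2 + hmB - hcDb
    have hval : p.eval₂ (Int.castRingHom ↥R) (⟨y, hyR⟩ : ↥R) = 0 := by
      apply Subtype.coe_injective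
      show R.subtype _ = R.subtype 0
      rw [hom_eval₂, map_zero, Subsingleton.elim (R.subtype.comp (Int.castRingHom ↥R))
        (Int.castRingHom (QuaternionAlgebra ℚ c₁ 0 c₂))]
      show p.eval₂ _ y = 0
      rw [hp_def, C_mul_X_eq_monomial]
      simp only [eval₂_add, eval₂_monomial, eval₂_X_pow, eval₂_C, Int.coe_castRingHom,
        Int.cast_neg, pow_one]
      rw [sq]
      linear_combination (norm := noncomm_ring) hyquad
    set φ : ℤ[X] →+* ↥R :=
      eval₂RingHom' (Int.castRingHom ↥R) (⟨y, hyR⟩ : ↥R) (fun a => Int.cast_commute a _)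
      with hφ_def
    have hker : ∀ g ∈ Ideal.span ({p} : Set ℤ[X]), φ g = 0 := by
      intro g hg
      obtain ⟨c, rfl⟩ := Ideal.mem_span_singleton'.mp hg
      rw [map_mul]
      have hφp : φ p = 0 := hval
      rw [hφp, mul_zero]
    refine ⟨Ideal.Quotient.lift (Ideal.span ({p} : Set ℤ[X])) φ hker, ?_⟩
    refine (injective_iff_map_eq_zero (Ideal.Quotient.lift (Ideal.span ({p} : Set ℤ[X])) φ hker)).mpr ?_
    intro z hz
    obtain ⟨q, rfl⟩ := AdjoinRoot.mk_surjective z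
    have hd1 : (C (-Δ) * X + C m : ℤ[X]).degree ≤ 1 := by
      refine le_trans (degree_add_le _ _) (max_le ?_ ?_)
      · exact le_trans (degree_mul_le _ _)
          (by simpa using add_le_add (degree_C_le (R := ℤ) (a := -Δ)) (le_of_eq (degree_X (R := ℤ))))
      · exact le_trans degree_C_le (by norm_num)
    have hpm : p.Monic := by
      rw [hp_def, add_assoc]
      exact monic_X_pow_add (lt_of_le_of_lt hd1 (by norm_num))
    have hpdeg : p.degree = 2 := by
      rw [hp_def, add_assoc]
      rw [degree_add_eq_left_of_degree_lt]
      · exact degree_X_pow 2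
      · rw [degree_X_pow]
        exact lt_of_le_of_lt hd1 (by norm_num)
    set q' : ℤ[X] := q %ₘ p with hq'
    set d : ℤ[X] := q /ₘ p with hd
    have hqd : q = q' + p * d := (modByMonic_add_div q p).symm
    have hle : q'.natDegree ≤ 1 := by
      by_cases hq0 : q' = 0
      · simp [hq0]
      · have hlt := degree_modByMonic_lt q hpm
        rw [← hq', hpdeg] at hlt
        have h2 := (natDegree_lt_iff_degree_lt (n := 2) hq0).mpr (by exact_mod_cast hlt)
        omega
    have hrem : q' = C (q'.coeff 1) * X + C (q'.coeff 0) := eq_X_add_C_of_natDegree_le_one hle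
    have hz' : q.eval₂ (Int.castRingHom ↥R) (⟨y, hyR⟩ : ↥R) = 0 := hz
    clear hz
    rename' hz' => hz
    rw [hqd, eval₂_add,
      eval₂_mul_noncomm _ _ (fun k => Int.cast_commute _ _), hval, zero_mul, add_zero] at hz
    rw [hrem, C_mul_X_eq_monomial, eval₂_add, eval₂_monomial, eval₂_C] at hz
    have hzB := congrArg R.subtype hz
    simp only [map_add, map_mul, map_intCast, map_zero, map_pow, pow_one,
      Int.coe_castRingHom] at hzB
    rw [show (R.subtype ⟨y, hyR⟩ : QuaternionAlgebra ℚ c₁ 0 c₂) = y from rfl] at hzB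
    -- components of hzB : ↑(coeff 1) * y + ↑(coeff 0) = 0
    by_cases hv : q'.coeff 1 = 0
    · have hu : q'.coeff 0 = 0 := by
        rw [hv] at hzB
        simp at hzB
        have := congrArg QuaternionAlgebra.re hzB
        simpa using this
      rw [hqd, map_add, map_mul, AdjoinRoot.mk_self, zero_mul, add_zero, hrem, hv, hu]
      simp
      rfl
    · exfalso
      have hyI : y.imI = 0 := by
        have := congrArg QuaternionAlgebra.imI hzB
        simp [QuaternionAlgebra.imI_mul] at this
        rcases this with h | h
        · exact absurd (by exact_mod_cast h) hv
        · exact h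
      have hyJ : y.imJ = 0 := by
        have := congrArg QuaternionAlgebra.imJ hzB
        simp [QuaternionAlgebra.imJ_mul] at this
        rcases this with h | h
        · exact absurd (by exact_mod_cast h) hv
        · exact h
      have hyK : y.imK = 0 := by
        have := congrArg QuaternionAlgebra.imK hzB
        simp [QuaternionAlgebra.imK_mul] at this
        rcases this with h | h
        · exact absurd (by exact_mod_cast h) hv
        · exact h
      have hbI : b.imI = 0 := by
        have := congrArg QuaternionAlgebra.imI h2y
        rw [two_mul] at this
        simp [hyI] at this
        linarith [this]
      have hbJ : b.imJ = 0 := by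
        have := congrArg QuaternionAlgebra.imJ h2y
        rw [two_mul] at this
        simp [hyJ] at this
        linarith [this]
      have hbK : b.imK = 0 := by
        have := congrArg QuaternionAlgebra.imK h2y
        rw [two_mul] at this
        simp [hyK] at this
        linarith [this]
      have hb0 : b = 0 := by
        ext
        · simp [hbre]
        · simp [hbI]
        · simp [hbJ]
        · simp [hbK]
      rw [hb0, mul_zero] at hb2
      have := congrArg QuaternionAlgebra.re hb2
      simp at this
      have : (Δ:ℚ) = 0 := by exact_mod_cast this.symm
      exact absurd this (by exact_mod_cast hΔneg.ne)
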